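/- For a choice (j, i) with i ∈ S_j, let Δ₁(j,i) = x⁺ − x and Δ₂(j,i) = η·((Σ_{j'} u⁺_{j'} + m·ᾱ⁺) − v). Then E[ ‖Δ₁‖² − 2·⟨Δ₁, Δ₂⟩ + 2·‖Δ₂‖² ] ≤ (4·m·p_min·η²/n)·( 4·Σ_j ‖g*_j‖² + 4·Σ_j ‖β*_j‖² + (n/m)·Σ_j ‖u_j‖² + 2·Σ_i ‖α*_i‖² + 2·Σ_i ‖∇f_i(x) − ∇f_i(x*)‖² ). -/

import Mathlib

set_option maxHeartbeats 1000000


open Finset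
open scoped RealInnerProductSpace BigOperators

noncomputable section

/-- The state of the ADSAGA algorithm. -/
structure AdsagaState (d n m : ℕ) where
  x : EuclideanSpace ℝ (Fin d)
  u : Fin m → EuclideanSpace ℝ (Fin d)
  g : Fin m → EuclideanSpace ℝ (Fin d)
  beta : Fin m → EuclideanSpace ℝ (Fin d)
  alpha : Fin n → EuclideanSpace ℝ (Fin d)
  idx : Fin m → Fin n

namespace AdsagaState

variable {d n m : ℕ}

/-- `h_j = g_j - β_j`. -/
def hvec (S : AdsagaState d n m) (j : Fin m) : EuclideanSpace ℝ (Fin d) :=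
  S.g j - S.beta j

/-- `ᾱ = (1/n) ∑ i, α_i`. -/
def abar (S : AdsagaState d n m) : EuclideanSpace ℝ (Fin d) :=
  ((1 : ℝ) / n) • ∑ i, S.alpha i

/-- `v = ∑ j, u_j + m • ᾱ`. -/
def v (S : AdsagaState d n m) : EuclideanSpace ℝ (Fin d) :=
  (∑ j, S.u j) + (m : ℝ) • S.abar

/-- One ADSAGA step with choice `(j, i)` (where `i` is meant to lie in `S_j`). -/
def step (gradf : Fin n → EuclideanSpace ℝ (Fin d) → EuclideanSpace ℝ (Fin d))
    (p : Fin m → ℝ) (pmin η : ℝ) (S : AdsagaState d n m) (j : Fin m) (i : Fin n) :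
    AdsagaState d n m where
  x := S.x - (η * pmin / p j) • (S.u j + S.abar)
  alpha := Function.update S.alpha (S.idx j) (S.g j)
  g := Function.update S.g j (gradf i S.x)
  beta := Function.update S.beta j (if i = S.idx j then S.g j else S.alpha i)
  u := Function.update S.u j
    ((1 - pmin / p j) • S.u j
      + (pmin / p j) • (gradf i S.x - (if i = S.idx j then S.g j else S.alpha i))
      - ((m : ℝ) / n * (1 - pmin / p j)) • S.hvec j)
  idx := Function.update S.idx j i

/-- Run `k` ADSAGA steps, with the `t`-th choice given by the index `ω t` (on machine `J (ω t)`). -/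
def run (gradf : Fin n → EuclideanSpace ℝ (Fin d) → EuclideanSpace ℝ (Fin d))
    (p : Fin m → ℝ) (pmin η : ℝ) (J : Fin n → Fin m) (S0 : AdsagaState d n m) :
    (k : ℕ) → (Fin k → Fin n) → AdsagaState d n m
  | 0, _ => S0
  | (k + 1), ω =>
      step gradf p pmin η (run gradf p pmin η J S0 k (fun t => ω t.castSucc))
        (J (ω (Fin.last k))) (ω (Fin.last k))

end AdsagaState

/-- `φ1 = 4mη (f(x) - f(x^*))` where `f` is the average of the `f_i`. -/
def phi1 (f : Fin n → EuclideanSpace ℝ (Fin d) → ℝ) (xstar : EuclideanSpace ℝ (Fin d))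
    {m : ℕ} (η : ℝ) (S : AdsagaState d n m) : ℝ :=
  4 * (m : ℝ) * η * ((((1 : ℝ) / n) * ∑ i, f i S.x) - (((1 : ℝ) / n) * ∑ i, f i xstar))

/-- `φ2 = ‖y‖² - 2η⟪y, v⟫ + 2η²‖v‖²`. -/
def phi2 (xstar : EuclideanSpace ℝ (Fin d)) {n m : ℕ} (η : ℝ) (S : AdsagaState d n m) : ℝ :=
  ‖S.x - xstar‖ ^ 2 - 2 * η * ⟪S.x - xstar, S.v⟫ + 2 * η ^ 2 * ‖S.v‖ ^ 2

/-- `φ3 = η² c3 ∑ j, (pmin / p j) ‖g*_j‖²`. -/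
def phi3 (gradf : Fin n → EuclideanSpace ℝ (Fin d) → EuclideanSpace ℝ (Fin d))
    (xstar : EuclideanSpace ℝ (Fin d)) {m : ℕ} (p : Fin m → ℝ) (pmin η c3 : ℝ)
    (S : AdsagaState d n m) : ℝ :=
  η ^ 2 * c3 * ∑ j, (pmin / p j) * ‖S.g j - gradf (S.idx j) xstar‖ ^ 2

/-- `φ4 = η² c4 (2 ∑ i, (pmin / p (J i)) ‖α*_i‖² - ∑ j, (pmin / p j) ‖β*_j‖²)`. -/
def phi4 (gradf : Fin n → EuclideanSpace ℝ (Fin d) → EuclideanSpace ℝ (Fin d))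
    (xstar : EuclideanSpace ℝ (Fin d)) {m : ℕ} (J : Fin n → Fin m) (p : Fin m → ℝ)
    (pmin η c4 : ℝ) (S : AdsagaState d n m) : ℝ :=
  η ^ 2 * c4 * ((2 * ∑ i, (pmin / p (J i)) * ‖S.alpha i - gradf i xstar‖ ^ 2)
    - ∑ j, (pmin / p j) * ‖S.beta j - gradf (S.idx j) xstar‖ ^ 2)

/-- `φ5 = η² c5 ∑ j, ‖u_j‖²`. -/
def phi5 {d n m : ℕ} (η c5 : ℝ) (S : AdsagaState d n m) : ℝ :=
  η ^ 2 * c5 * ∑ j, ‖S.u j‖ ^ 2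

/-- The total potential `φ = φ1 + φ2 + φ3 + φ4 + φ5`. -/
def phiTot (f : Fin n → EuclideanSpace ℝ (Fin d) → ℝ)
    (gradf : Fin n → EuclideanSpace ℝ (Fin d) → EuclideanSpace ℝ (Fin d))
    (xstar : EuclideanSpace ℝ (Fin d)) {m : ℕ} (J : Fin n → Fin m) (p : Fin m → ℝ)
    (pmin η c3 c4 c5 : ℝ) (S : AdsagaState d n m) : ℝ :=
  phi1 f xstar η S + phi2 xstar η S + phi3 gradf xstar p pmin η c3 S
    + phi4 gradf xstar J p pmin η c4 S + phi5 η c5 S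

end


section Aux
variable {F : Type*} [NormedAddCommGroup F] [InnerProductSpace ℝ F]

lemma adsaga_two_inner_le (x y : F) : 2 * ⟪x, y⟫ ≤ ‖x‖^2 + ‖y‖^2 := by
  have h := norm_sub_sq_real x y
  nlinarith [sq_nonneg ‖x - y‖]

lemma adsaga_sq_add (x y : F) : ‖x + y‖^2 ≤ (3/2)*‖x‖^2 + 3*‖y‖^2 := by
  have h := norm_add_sq_real x y
  have h2 := abs_le.mp (abs_real_inner_le_norm x y)
  nlinarith [sq_nonneg (‖x‖ - 2*‖y‖)]

lemma adsaga_sq_sub (x y : F) : ‖x - y‖^2 ≤ (4/3)*‖x‖^2 + 4*‖y‖^2 := by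
  have h := norm_sub_sq_real x y
  have h2 := abs_le.mp (abs_real_inner_le_norm x y)
  nlinarith [sq_nonneg (‖x‖ - 3*‖y‖)]

lemma adsaga_sq_sub2 (x y : F) : ‖x - y‖^2 ≤ 2*‖x‖^2 + 2*‖y‖^2 := by
  have h := norm_sub_sq_real x y
  have h2 := abs_le.mp (abs_real_inner_le_norm x y)
  nlinarith [sq_nonneg (‖x‖ - ‖y‖)]

lemma adsaga_term_identity (κ : ℝ) (P R : F) :
    ‖(-κ) • P‖^2 - 2*⟪(-κ) • P, κ • R⟫ + 2*‖κ • R‖^2 = κ^2 * (‖P + R‖^2 + ‖R‖^2) := by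
  rw [norm_add_sq_real, norm_smul, norm_smul, real_inner_smul_left, real_inner_smul_right]
  simp only [Real.norm_eq_abs, abs_neg, mul_pow, sq_abs]
  ring

end Aux

section Aux2
variable {ι κι : Type*} [Fintype ι] [Fintype κι] [DecidableEq ι] [DecidableEq κι]

lemma adsaga_sum_update {β : Type*} [AddCommGroup β] (f : ι → β) (j : ι) (b : β) :
    ∑ x, Function.update f j b x = (∑ x, f x) + (b - f j) := by
  have h : ∀ x, Function.update f j b x = f x + (if x = j then b - f j else 0) := by
    intro x
    by_cases hx : x = j
    · subst hx; simp
    · simp [Function.update_of_ne hx, hx]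
  rw [Finset.sum_congr rfl (fun x _ => h x), Finset.sum_add_distrib]
  simp

lemma adsaga_sum_fiber {β : Type*} [AddCommMonoid β] {k : ℕ} (J : ι → κι)
    (hpart : ∀ j, (Finset.univ.filter (fun i => J i = j)).card = k) (F : κι → β) :
    ∑ i, F (J i) = k • ∑ j, F j := by
  rw [← Finset.sum_fiberwise_of_maps_to (fun i (_ : i ∈ Finset.univ) => Finset.mem_univ (J i))
    (fun i => F (J i)), Finset.smul_sum]
  refine Finset.sum_congr rfl fun j _ => ?_
  rw [Finset.sum_congr rfl (fun i hi => by rw [(Finset.mem_filter.mp hi).2]),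
    Finset.sum_const, hpart j]

lemma adsaga_sum_ite_idx {β : Type*} [AddCommMonoid β] (J : ι → κι) (idx : κι → ι)
    (hidx : ∀ j, J (idx j) = j) (F : κι → β) :
    ∑ i, (if i = idx (J i) then F (J i) else 0) = ∑ j, F j := by
  have h : ∀ i : ι, (if i = idx (J i) then F (J i) else 0)
      = ∑ j, (if i = idx j then F j else 0) := by
    intro i
    by_cases hc : i = idx (J i)
    · rw [if_pos hc, Finset.sum_eq_single (J i)]
      · rw [if_pos hc]
      · intro j _ hj
        rw [if_neg]
        intro hij
        exact hj (by rw [hij, hidx])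
      · simp
    · rw [if_neg hc]
      symm
      apply Finset.sum_eq_zero
      intro j _
      rw [if_neg]
      intro hij
      exact hc (by rw [hij, hidx])
  rw [Finset.sum_congr rfl (fun i _ => h i), Finset.sum_comm]
  refine Finset.sum_congr rfl fun j _ => ?_
  simp

end Aux2

theorem adsaga_quadratic_term_bound
    {d n m : ℕ} (hd : 0 < d) (hn : 0 < n) (hm : 0 < m) (hmn : m ∣ n)
    (L Lf μ : ℝ) (hL : 0 < L) (hLf : 0 < Lf) (hμ : 0 < μ)
    (f : Fin n → EuclideanSpace ℝ (Fin d) → ℝ)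
    (gradf : Fin n → EuclideanSpace ℝ (Fin d) → EuclideanSpace ℝ (Fin d))
    (hgrad : ∀ i x, HasGradientAt (f i) (gradf i x) x)
    (hconv : ∀ i, ConvexOn ℝ Set.univ (f i))
    (hsmooth : ∀ i (x y : EuclideanSpace ℝ (Fin d)), ‖gradf i x - gradf i y‖ ≤ L * ‖x - y‖)
    (hFsmooth : ∀ x y : EuclideanSpace ℝ (Fin d),
      ‖((1 : ℝ) / n) • (∑ i, gradf i x) - ((1 : ℝ) / n) • (∑ i, gradf i y)‖ ≤ Lf * ‖x - y‖)
    (hFstrong : ∀ x y : EuclideanSpace ℝ (Fin d),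
      μ * ‖x - y‖ ^ 2 ≤
        ⟪((1 : ℝ) / n) • (∑ i, gradf i x) - ((1 : ℝ) / n) • (∑ i, gradf i y), x - y⟫)
    (xstar : EuclideanSpace ℝ (Fin d))
    (hmin : ∀ x : EuclideanSpace ℝ (Fin d),
      (((1 : ℝ) / n) * ∑ i, f i xstar) ≤ ((1 : ℝ) / n) * ∑ i, f i x)
    (hstarzero : (∑ i, gradf i xstar) = 0)
    (J : Fin n → Fin m)
    (hpart : ∀ j, (Finset.univ.filter (fun i => J i = j)).card = n / m)
    (p : Fin m → ℝ) (hp : ∀ j, 0 < p j) (hpsum : (∑ j, p j) = 1)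
    (pmin pmax : ℝ)
    (hpmin : IsLeast (Set.range p) pmin) (hpmax : IsGreatest (Set.range p) pmax)
    (η : ℝ) (hη : 0 < η)
    (S : AdsagaState d n m)
    (hidx : ∀ j, J (S.idx j) = j)
    (hinv : ∀ j, S.alpha (S.idx j) = S.beta j)
    :
    (∑ i : Fin n, p (J i) * ((m : ℝ) / n) *
        (‖(AdsagaState.step gradf p pmin η S (J i) i).x - S.x‖ ^ 2
          - 2 * ⟪(AdsagaState.step gradf p pmin η S (J i) i).x - S.x, η • ((AdsagaState.step gradf p pmin η S (J i) i).v - S.v)⟫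
          + 2 * ‖η • ((AdsagaState.step gradf p pmin η S (J i) i).v - S.v)‖ ^ 2))
      ≤ (4 * (m : ℝ) * pmin * η ^ 2 / n) *
          ((4 * ∑ j, ‖S.g j - gradf (S.idx j) xstar‖ ^ 2)
            + (4 * ∑ j, ‖S.beta j - gradf (S.idx j) xstar‖ ^ 2)
            + (((n : ℝ) / m) * ∑ j, ‖S.u j‖ ^ 2)
            + (2 * ∑ i, ‖S.alpha i - gradf i xstar‖ ^ 2)
            + (2 * ∑ i, ‖gradf i S.x - gradf i xstar‖ ^ 2)) := by
  
  classical
  have hn0 : (n:ℝ) ≠ 0 := Nat.cast_ne_zero.mpr hn.ne'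
  have hm0 : (m:ℝ) ≠ 0 := Nat.cast_ne_zero.mpr hm.ne'
  have hnm_cast : ((n/m : ℕ) : ℝ) = (n:ℝ)/(m:ℝ) := Nat.cast_div hmn hm0
  obtain ⟨j0, hj0⟩ := hpmin.1
  have hpmin_pos : 0 < pmin := hj0 ▸ hp j0
  have hpmin_le : ∀ j, pmin ≤ p j := fun j => hpmin.2 ⟨j, rfl⟩
  set q : ℝ := (m:ℝ)/(n:ℝ) with hqdef
  have hq_pos : 0 < q := by positivity
  have hq_le1 : q ≤ 1 := by
    rw [hqdef, div_le_one (by positivity)]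
    exact_mod_cast Nat.le_of_dvd hn hmn
  set a : EuclideanSpace ℝ (Fin d) := S.abar with hadef
  set W : Fin n → EuclideanSpace ℝ (Fin d) := fun i =>
    (gradf i S.x - (if i = S.idx (J i) then S.g (J i) else S.alpha i))
      + q • (S.g (J i) - S.beta (J i)) with hWdef
  -- step A: the x-increment
  have hx : ∀ i, (AdsagaState.step gradf p pmin η S (J i) i).x - S.x
      = (-(η * pmin / p (J i))) • (S.u (J i) + a) := by
    intro i
    show (S.x - (η * pmin / p (J i)) • (S.u (J i) + S.abar)) - S.x = _
    module
  -- step A: the v-increment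
  have hd2 : ∀ i, η • ((AdsagaState.step gradf p pmin η S (J i) i).v - S.v)
      = (η * pmin / p (J i)) • (W i - S.u (J i)) := by
    intro i
    have hpne : p (J i) ≠ 0 := (hp (J i)).ne'
    simp only [AdsagaState.v, AdsagaState.abar, AdsagaState.step, AdsagaState.hvec]
    rw [adsaga_sum_update, adsaga_sum_update, hinv (J i)]
    simp only [hWdef, hadef, AdsagaState.abar, hqdef]
    match_scalars <;> ring
  -- per-term identity
  have hterm : ∀ i : Fin n,
      ‖(AdsagaState.step gradf p pmin η S (J i) i).x - S.x‖ ^ 2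
        - 2 * ⟪(AdsagaState.step gradf p pmin η S (J i) i).x - S.x,
            η • ((AdsagaState.step gradf p pmin η S (J i) i).v - S.v)⟫
        + 2 * ‖η • ((AdsagaState.step gradf p pmin η S (J i) i).v - S.v)‖ ^ 2
      = (η * pmin / p (J i))^2 * (‖a + W i‖^2 + ‖W i - S.u (J i)‖^2) := by
    intro i
    rw [hx i, hd2 i, adsaga_term_identity]
    rw [show S.u (J i) + a + (W i - S.u (J i)) = a + W i by abel]
  
  -- fiberwise sums
  have hfib_u : ∑ i, ‖S.u (J i)‖^2 = ((n:ℝ)/m) * ∑ j, ‖S.u j‖^2 := by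
    rw [adsaga_sum_fiber J hpart (fun j => ‖S.u j‖^2), nsmul_eq_mul, hnm_cast]
  have hfib_h : ∑ i, ‖S.g (J i) - S.beta (J i)‖^2
      = ((n:ℝ)/m) * ∑ j, ‖S.g j - S.beta j‖^2 := by
    rw [adsaga_sum_fiber J hpart (fun j => ‖S.g j - S.beta j‖^2), nsmul_eq_mul, hnm_cast]
  have hq_inv : q * ((n:ℝ)/(m:ℝ)) = 1 := by rw [hqdef]; field_simp
  have hfib_hv : ∑ i, q • (S.g (J i) - S.beta (J i)) = ∑ j, (S.g j - S.beta j) := by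
    rw [← Finset.smul_sum, adsaga_sum_fiber J hpart (fun j => S.g j - S.beta j),
      ← Nat.cast_smul_eq_nsmul ℝ, smul_smul, hnm_cast, hq_inv, one_smul]
  have hsum_alpha : ∑ i, S.alpha i = (n:ℝ) • a := by
    rw [hadef, AdsagaState.abar, smul_smul, mul_one_div, div_self hn0, one_smul]
  have hsum_c : ∑ i, (if i = S.idx (J i) then S.g (J i) else S.alpha i)
      = (∑ i, S.alpha i) + ∑ j, (S.g j - S.beta j) := by
    have h1 : ∀ i : Fin n, (if i = S.idx (J i) then S.g (J i) else S.alpha i)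
        = S.alpha i + (if i = S.idx (J i) then S.g (J i) - S.beta (J i) else 0) := by
      intro i
      by_cases hcase : i = S.idx (J i)
      · rw [if_pos hcase, if_pos hcase]
        have hab : S.alpha i = S.beta (J i) := by
          conv_lhs => rw [hcase]
          exact hinv (J i)
        rw [hab]; abel
      · rw [if_neg hcase, if_neg hcase, add_zero]
    rw [Finset.sum_congr rfl fun i _ => h1 i, Finset.sum_add_distrib,
      adsaga_sum_ite_idx J S.idx hidx (fun j => S.g j - S.beta j)]
  have hsumW : ∑ i, W i = (∑ i, (gradf i S.x - gradf i xstar)) - (n:ℝ) • a := by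
    simp only [hWdef]
    rw [Finset.sum_add_distrib, hfib_hv, Finset.sum_sub_distrib, hsum_c]
    rw [show (∑ i, (gradf i S.x - gradf i xstar))
        = (∑ i, gradf i S.x) - (∑ i, gradf i xstar) from Finset.sum_sub_distrib _ _,
      hstarzero, ← hsum_alpha]
    abel
  -- C1
  have hC1 : ∑ i, ‖a + W i‖^2
      ≤ (∑ i, ‖W i‖^2) + ∑ i, ‖gradf i S.x - gradf i xstar‖^2 := by
    have hEq : ∑ i, ‖a + W i‖^2
        = (n:ℝ)*‖a‖^2
          + 2*(⟪a, ∑ i, (gradf i S.x - gradf i xstar)⟫ - (n:ℝ)*‖a‖^2)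
          + ∑ i, ‖W i‖^2 := by
      calc ∑ i, ‖a + W i‖^2 = ∑ i, (‖a‖^2 + 2*⟪a, W i⟫ + ‖W i‖^2) :=
          Finset.sum_congr rfl fun i _ => norm_add_sq_real a (W i)
        _ = (n:ℝ)*‖a‖^2 + 2*⟪a, ∑ i, W i⟫ + ∑ i, ‖W i‖^2 := by
          rw [Finset.sum_add_distrib, Finset.sum_add_distrib, Finset.sum_const,
            Finset.card_univ, Fintype.card_fin, nsmul_eq_mul, ← Finset.mul_sum, ← inner_sum]
        _ = _ := by
          rw [hsumW, inner_sub_right, real_inner_smul_right, real_inner_self_eq_norm_sq]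
    have hb : 2*⟪a, ∑ i, (gradf i S.x - gradf i xstar)⟫
        ≤ (n:ℝ)*‖a‖^2 + ∑ i, ‖gradf i S.x - gradf i xstar‖^2 := by
      rw [inner_sum]
      calc 2*∑ i, ⟪a, gradf i S.x - gradf i xstar⟫
          = ∑ i, 2*⟪a, gradf i S.x - gradf i xstar⟫ := by rw [Finset.mul_sum]
        _ ≤ ∑ i, (‖a‖^2 + ‖gradf i S.x - gradf i xstar‖^2) :=
          Finset.sum_le_sum fun i _ => adsaga_two_inner_le _ _
        _ = _ := by
          rw [Finset.sum_add_distrib, Finset.sum_const, Finset.card_univ,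
            Fintype.card_fin, nsmul_eq_mul]
    linarith
  -- C2
  have hC2 : ∑ i, ‖W i - S.u (J i)‖^2
      ≤ (4/3)*(∑ i, ‖W i‖^2) + 4*(((n:ℝ)/m) * ∑ j, ‖S.u j‖^2) := by
    calc ∑ i, ‖W i - S.u (J i)‖^2 ≤ ∑ i, ((4/3)*‖W i‖^2 + 4*‖S.u (J i)‖^2) :=
        Finset.sum_le_sum fun i _ => adsaga_sq_sub _ _
      _ = (4/3)*(∑ i, ‖W i‖^2) + 4*∑ i, ‖S.u (J i)‖^2 := by
        rw [Finset.sum_add_distrib, ← Finset.mul_sum, ← Finset.mul_sum]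
      _ = _ := by rw [hfib_u]
  -- C3
  have hC3 : ∑ i, ‖W i‖^2 ≤ 3*(∑ i, ‖gradf i S.x - gradf i xstar‖^2)
      + 3*(∑ i, ‖S.alpha i - gradf i xstar‖^2) + 3*∑ j, ‖S.g j - S.beta j‖^2 := by
    have hWi : ∀ i : Fin n, ‖W i‖^2 ≤ 3*‖gradf i S.x - gradf i xstar‖^2
        + 3*‖S.alpha i - gradf i xstar‖^2
        + (3*q^2*‖S.g (J i) - S.beta (J i)‖^2
           + (if i = S.idx (J i) then 3*(1-q)^2*‖S.g (J i) - S.beta (J i)‖^2 else 0)) := by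
      intro i
      have hz : ‖gradf i S.x - S.alpha i‖^2 ≤ 2*‖gradf i S.x - gradf i xstar‖^2
          + 2*‖S.alpha i - gradf i xstar‖^2 := by
        rw [show gradf i S.x - S.alpha i
            = (gradf i S.x - gradf i xstar) - (S.alpha i - gradf i xstar) by abel]
        exact adsaga_sq_sub2 _ _
      by_cases hcase : i = S.idx (J i)
      · have hWeq : W i = (gradf i S.x - S.alpha i)
            + (-(1-q)) • (S.g (J i) - S.beta (J i)) := by
          simp only [hWdef, if_pos hcase]
          have hab : S.alpha i = S.beta (J i) := by
            conv_lhs => rw [hcase]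
            exact hinv (J i)
          rw [hab]; module
        rw [hWeq, if_pos hcase]
        have h1 := adsaga_sq_add (gradf i S.x - S.alpha i)
          ((-(1-q)) • (S.g (J i) - S.beta (J i)))
        have h2 : ‖(-(1-q)) • (S.g (J i) - S.beta (J i))‖^2
            = (1-q)^2 * ‖S.g (J i) - S.beta (J i)‖^2 := by
          rw [norm_smul, Real.norm_eq_abs, mul_pow, sq_abs]; ring
        have h3 : 0 ≤ q^2*‖S.g (J i) - S.beta (J i)‖^2 := by positivity
        linarith
      · have hWeq : W i = (gradf i S.x - S.alpha i) + q • (S.g (J i) - S.beta (J i)) := by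
          simp only [hWdef, if_neg hcase]
        rw [hWeq, if_neg hcase]
        have h1 := adsaga_sq_add (gradf i S.x - S.alpha i) (q • (S.g (J i) - S.beta (J i)))
        have h2 : ‖q • (S.g (J i) - S.beta (J i))‖^2 = q^2*‖S.g (J i) - S.beta (J i)‖^2 := by
          rw [norm_smul, Real.norm_eq_abs, mul_pow, sq_abs]
        linarith
    have hstep : ∑ i, ‖W i‖^2 ≤ 3*(∑ i, ‖gradf i S.x - gradf i xstar‖^2)
        + 3*(∑ i, ‖S.alpha i - gradf i xstar‖^2)
        + (3*q^2*(((n:ℝ)/m) * ∑ j, ‖S.g j - S.beta j‖^2)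
           + 3*(1-q)^2*∑ j, ‖S.g j - S.beta j‖^2) := by
      calc ∑ i, ‖W i‖^2 ≤ ∑ i, (3*‖gradf i S.x - gradf i xstar‖^2
          + 3*‖S.alpha i - gradf i xstar‖^2
          + (3*q^2*‖S.g (J i) - S.beta (J i)‖^2
             + (if i = S.idx (J i) then 3*(1-q)^2*‖S.g (J i) - S.beta (J i)‖^2 else 0))) :=
          Finset.sum_le_sum fun i _ => hWi i
        _ = 3*(∑ i, ‖gradf i S.x - gradf i xstar‖^2)
            + 3*(∑ i, ‖S.alpha i - gradf i xstar‖^2)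
            + (3*q^2*(∑ i, ‖S.g (J i) - S.beta (J i)‖^2)
               + ∑ j, 3*(1-q)^2*‖S.g j - S.beta j‖^2) := by
          rw [Finset.sum_add_distrib, Finset.sum_add_distrib, Finset.sum_add_distrib,
            adsaga_sum_ite_idx J S.idx hidx
              (fun j => 3*(1-q)^2*‖S.g j - S.beta j‖^2),
            ← Finset.mul_sum, ← Finset.mul_sum, ← Finset.mul_sum]
        _ = _ := by
          rw [hfib_h, ← Finset.mul_sum]
    have hX : (0:ℝ) ≤ ∑ j, ‖S.g j - S.beta j‖^2 := by positivity
    have hkey : 3*q^2*(((n:ℝ)/m) * ∑ j, ‖S.g j - S.beta j‖^2)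
        + 3*(1-q)^2*∑ j, ‖S.g j - S.beta j‖^2 ≤ 3*∑ j, ‖S.g j - S.beta j‖^2 := by
      have hqq : q^2*((n:ℝ)/m) = q := by
        rw [pow_two, mul_assoc, hq_inv, mul_one]
      calc 3*q^2*(((n:ℝ)/m) * ∑ j, ‖S.g j - S.beta j‖^2)
            + 3*(1-q)^2*∑ j, ‖S.g j - S.beta j‖^2
          = 3*(q^2*((n:ℝ)/m))*(∑ j, ‖S.g j - S.beta j‖^2)
            + 3*(1-q)^2*∑ j, ‖S.g j - S.beta j‖^2 := by ring
        _ = 3*q*(∑ j, ‖S.g j - S.beta j‖^2)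
            + 3*(1-q)^2*∑ j, ‖S.g j - S.beta j‖^2 := by rw [hqq]
        _ ≤ _ := by
          nlinarith [mul_nonneg (mul_nonneg hX hq_pos.le) (sub_nonneg.2 hq_le1)]
    linarith
  -- h_j in terms of g* and beta*
  have hhv : ∑ j, ‖S.g j - S.beta j‖^2
      ≤ 2*(∑ j, ‖S.g j - gradf (S.idx j) xstar‖^2)
        + 2*(∑ j, ‖S.beta j - gradf (S.idx j) xstar‖^2) := by
    have h : ∀ j : Fin m, ‖S.g j - S.beta j‖^2 ≤ 2*‖S.g j - gradf (S.idx j) xstar‖^2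
        + 2*‖S.beta j - gradf (S.idx j) xstar‖^2 := by
      intro j
      rw [show S.g j - S.beta j
          = (S.g j - gradf (S.idx j) xstar) - (S.beta j - gradf (S.idx j) xstar) by abel]
      exact adsaga_sq_sub2 _ _
    have h2 := Finset.sum_le_sum (fun j (_ : j ∈ Finset.univ) => h j)
    rw [Finset.sum_add_distrib, ← Finset.mul_sum, ← Finset.mul_sum] at h2
    exact h2
  -- total
  have hN : ∑ i, (‖a + W i‖^2 + ‖W i - S.u (J i)‖^2)
      ≤ 4*((4 * ∑ j, ‖S.g j - gradf (S.idx j) xstar‖ ^ 2)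
            + (4 * ∑ j, ‖S.beta j - gradf (S.idx j) xstar‖ ^ 2)
            + (((n : ℝ) / m) * ∑ j, ‖S.u j‖ ^ 2)
            + (2 * ∑ i, ‖S.alpha i - gradf i xstar‖ ^ 2)
            + (2 * ∑ i, ‖gradf i S.x - gradf i xstar‖ ^ 2)) := by
    rw [Finset.sum_add_distrib]
    have hSg : (0:ℝ) ≤ ∑ j, ‖S.g j - gradf (S.idx j) xstar‖ ^ 2 := by positivity
    have hSb : (0:ℝ) ≤ ∑ j, ‖S.beta j - gradf (S.idx j) xstar‖ ^ 2 := by positivity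
    have hSa : (0:ℝ) ≤ ∑ i, ‖S.alpha i - gradf i xstar‖ ^ 2 := by positivity
    have hSn : (0:ℝ) ≤ ∑ i, ‖gradf i S.x - gradf i xstar‖ ^ 2 := by positivity
    linarith
  -- final assembly
  have hNi : ∀ i : Fin n, (0:ℝ) ≤ ‖a + W i‖^2 + ‖W i - S.u (J i)‖^2 := by
    intro i; positivity
  calc (∑ i : Fin n, p (J i) * q *
        (‖(AdsagaState.step gradf p pmin η S (J i) i).x - S.x‖ ^ 2
          - 2 * ⟪(AdsagaState.step gradf p pmin η S (J i) i).x - S.x,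
              η • ((AdsagaState.step gradf p pmin η S (J i) i).v - S.v)⟫
          + 2 * ‖η • ((AdsagaState.step gradf p pmin η S (J i) i).v - S.v)‖ ^ 2))
      = ∑ i : Fin n, p (J i) * q *
        ((η * pmin / p (J i))^2 * (‖a + W i‖^2 + ‖W i - S.u (J i)‖^2)) :=
      Finset.sum_congr rfl fun i _ => by rw [hterm i]
    _ ≤ ∑ i : Fin n, q * (η^2*pmin) * (‖a + W i‖^2 + ‖W i - S.u (J i)‖^2) := by
      refine Finset.sum_le_sum fun i _ => ?_
      have hpj := hp (J i)
      have hco : p (J i) * (η * pmin / p (J i))^2 ≤ η^2*pmin := by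
        have he : p (J i) * (η * pmin / p (J i))^2 = η^2*pmin^2/p (J i) := by
          field_simp
        rw [he, div_le_iff₀ hpj]
        nlinarith [mul_nonneg (mul_nonneg (sq_nonneg η) hpmin_pos.le)
          (sub_nonneg.2 (hpmin_le (J i)))]
      calc p (J i) * q * ((η * pmin / p (J i))^2 * (‖a + W i‖^2 + ‖W i - S.u (J i)‖^2))
          = q * ((p (J i) * (η * pmin / p (J i))^2)
              * (‖a + W i‖^2 + ‖W i - S.u (J i)‖^2)) := by ring
        _ ≤ q * ((η^2*pmin) * (‖a + W i‖^2 + ‖W i - S.u (J i)‖^2)) := by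
          refine mul_le_mul_of_nonneg_left ?_ hq_pos.le
          exact mul_le_mul_of_nonneg_right hco (hNi i)
        _ = _ := by ring
    _ = q * (η^2*pmin) * ∑ i, (‖a + W i‖^2 + ‖W i - S.u (J i)‖^2) := by
      rw [← Finset.mul_sum]
    _ ≤ q * (η^2*pmin) * (4*((4 * ∑ j, ‖S.g j - gradf (S.idx j) xstar‖ ^ 2)
            + (4 * ∑ j, ‖S.beta j - gradf (S.idx j) xstar‖ ^ 2)
            + (((n : ℝ) / m) * ∑ j, ‖S.u j‖ ^ 2)
            + (2 * ∑ i, ‖S.alpha i - gradf i xstar‖ ^ 2)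
            + (2 * ∑ i, ‖gradf i S.x - gradf i xstar‖ ^ 2))) := by
      refine mul_le_mul_of_nonneg_left hN ?_
      positivity
    _ = (4 * (m : ℝ) * pmin * η ^ 2 / n) *
          ((4 * ∑ j, ‖S.g j - gradf (S.idx j) xstar‖ ^ 2)
            + (4 * ∑ j, ‖S.beta j - gradf (S.idx j) xstar‖ ^ 2)
            + (((n : ℝ) / m) * ∑ j, ‖S.u j‖ ^ 2)
            + (2 * ∑ i, ‖S.alpha i - gradf i xstar‖ ^ 2)
            + (2 * ∑ i, ‖gradf i S.x - gradf i xstar‖ ^ 2)) := by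
      rw [hqdef]; ring
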